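/- Let n₁, n₂, m, k be natural numbers. Let G₁ be an n₁×m and G₂ an n₂×m complex matrix, let Q₁ (n₁×k) and Q₂ (n₂×k) be complex matrices with Q₁ᴴ Q₁ = I and Q₂ᴴ Q₂ = I, let E₁, E₂ be k×k complex matrices, and let ε₁, ε₂, ε ≥ 0. Define G := fromRows G₁ G₂, Q := fromRows (Q₁ E₁) (Q₂ E₂), Ĝ := fromRows (Q₁ᴴ G₁) (Q₂ᴴ G₂), and Q̂ := fromRows E₁ E₂. If ‖G₁ − Q₁ Q₁ᴴ G₁‖_F ≤ ε₁, ‖G₂ − Q₂ Q₂ᴴ G₂‖_F ≤ ε₂, and ‖Ĝ − Q̂ Q̂ᴴ Ĝ‖_F ≤ ε, then ‖G − Q Qᴴ G‖_F² ≤ ε₁² + ε₂² + ε². -/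

import Mathlib

open Matrix

/-- The Frobenius norm of a complex matrix. -/
noncomputable def frobNorm {α β : Type*} [Fintype α] [Fintype β] (A : Matrix α β ℂ) : ℝ :=
  Real.sqrt (∑ i, ∑ j, ‖A i j‖ ^ 2)

lemma conj_mul_re (z : ℂ) : (star z * z).re = ‖z‖ ^ 2 := by
  rw [mul_comm, Complex.star_def, Complex.mul_conj, Complex.normSq_eq_norm_sq,
    Complex.ofReal_re]

noncomputable def frobSq {α β : Type*} [Fintype α] [Fintype β] (A : Matrix α β ℂ) : ℝ :=
  ∑ i, ∑ j, ‖A i j‖ ^ 2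

lemma frobSq_nonneg {α β : Type*} [Fintype α] [Fintype β] (A : Matrix α β ℂ) :
    0 ≤ frobSq A :=
  Finset.sum_nonneg fun _ _ => Finset.sum_nonneg fun _ _ => sq_nonneg _

lemma frobSq_eq_trace {α β : Type*} [Fintype α] [Fintype β] [DecidableEq β]
    (A : Matrix α β ℂ) : frobSq A = (Matrix.trace (Aᴴ * A)).re := by
  rw [frobSq, Finset.sum_comm]
  simp only [Matrix.trace, Matrix.diag, Matrix.mul_apply, Matrix.conjTranspose_apply,
    Complex.re_sum, conj_mul_re]

lemma frobSq_fromRows {α₁ α₂ β : Type*} [Fintype α₁] [Fintype α₂] [Fintype β]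
    (A : Matrix α₁ β ℂ) (B : Matrix α₂ β ℂ) :
    frobSq (Matrix.fromRows A B) = frobSq A + frobSq B := by
  simp [frobSq, Fintype.sum_sum_type]

lemma frobSq_add_orth {α β : Type*} [Fintype α] [Fintype β] [DecidableEq β]
    (X Y : Matrix α β ℂ) (h : Xᴴ * Y = 0) :
    frobSq (X + Y) = frobSq X + frobSq Y := by
  have h2 : Yᴴ * X = 0 := by
    have := congrArg Matrix.conjTranspose h
    simpa using this
  rw [frobSq_eq_trace, frobSq_eq_trace, frobSq_eq_trace]
  rw [Matrix.conjTranspose_add, Matrix.add_mul, Matrix.mul_add, Matrix.mul_add, h, h2]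
  simp [Matrix.trace_add]

lemma frobSq_isometry {α β γ : Type*} [Fintype α] [Fintype β] [Fintype γ]
    [DecidableEq β] [DecidableEq γ]
    (Q : Matrix α β ℂ) (R : Matrix β γ ℂ) (hQ : Qᴴ * Q = 1) :
    frobSq (Q * R) = frobSq R := by
  rw [frobSq_eq_trace, frobSq_eq_trace, Matrix.conjTranspose_mul, Matrix.mul_assoc,
    ← Matrix.mul_assoc Qᴴ, hQ, Matrix.one_mul]

lemma frobSq_le {α β : Type*} [Fintype α] [Fintype β] (A : Matrix α β ℂ) {e : ℝ}
    (he : 0 ≤ e) (h : Real.sqrt (frobSq A) ≤ e) : frobSq A ≤ e ^ 2 := by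
  have := Real.sqrt_le_sqrt (frobSq_nonneg A) -- dummy
  nlinarith [Real.sq_sqrt (frobSq_nonneg A), Real.sqrt_nonneg (frobSq A)]

lemma fromRows_sub {α₁ α₂ β : Type*}
    (A C : Matrix α₁ β ℂ) (B D : Matrix α₂ β ℂ) :
    Matrix.fromRows A B - Matrix.fromRows C D = Matrix.fromRows (A - C) (B - D) := by
  ext (i | i) j <;> simp

lemma frobNorm_eq {α β : Type*} [Fintype α] [Fintype β] (A : Matrix α β ℂ) :
    frobNorm A = Real.sqrt (frobSq A) := rfl

lemma frobNorm_sq {α β : Type*} [Fintype α] [Fintype β] (A : Matrix α β ℂ) :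
    frobNorm A ^ 2 = frobSq A := Real.sq_sqrt (frobSq_nonneg A)

/-- Induction step of the error estimate for the compression algorithm
(Theorem 6.1): the total error of the nested basis is bounded by the squared
sum of the sons' errors and the tolerance achieved for the condensed matrix. -/
theorem nested_basis_error_bound (n₁ n₂ m k : ℕ)
    (G₁ : Matrix (Fin n₁) (Fin m) ℂ) (G₂ : Matrix (Fin n₂) (Fin m) ℂ)
    (Q₁ : Matrix (Fin n₁) (Fin k) ℂ) (Q₂ : Matrix (Fin n₂) (Fin k) ℂ)
    (E₁ E₂ : Matrix (Fin k) (Fin k) ℂ)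
    (ε₁ ε₂ ε : ℝ) (hε₁ : 0 ≤ ε₁) (hε₂ : 0 ≤ ε₂) (hε : 0 ≤ ε)
    (hQ₁ : Q₁ᴴ * Q₁ = 1) (hQ₂ : Q₂ᴴ * Q₂ = 1) :
    let G := Matrix.fromRows G₁ G₂
    let Q := Matrix.fromRows (Q₁ * E₁) (Q₂ * E₂)
    let Ghat := Matrix.fromRows (Q₁ᴴ * G₁) (Q₂ᴴ * G₂)
    let Qhat := Matrix.fromRows E₁ E₂
    frobNorm (G₁ - Q₁ * Q₁ᴴ * G₁) ≤ ε₁ →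
    frobNorm (G₂ - Q₂ * Q₂ᴴ * G₂) ≤ ε₂ →
    frobNorm (Ghat - Qhat * Qhatᴴ * Ghat) ≤ ε →
    frobNorm (G - Q * Qᴴ * G) ^ 2 ≤ ε₁ ^ 2 + ε₂ ^ 2 + ε ^ 2 := by
  intro G Q Ghat Qhat h1 h2 h3
  set S : Matrix (Fin k) (Fin m) ℂ := E₁ᴴ * (Q₁ᴴ * G₁) + E₂ᴴ * (Q₂ᴴ * G₂) with hS
  set R₁ : Matrix (Fin k) (Fin m) ℂ := Q₁ᴴ * G₁ - E₁ * S with hR₁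
  set R₂ : Matrix (Fin k) (Fin m) ℂ := Q₂ᴴ * G₂ - E₂ * S with hR₂
  set X₁ : Matrix (Fin n₁) (Fin m) ℂ := G₁ - Q₁ * Q₁ᴴ * G₁ with hX₁
  set X₂ : Matrix (Fin n₂) (Fin m) ℂ := G₂ - Q₂ * Q₂ᴴ * G₂ with hX₂
  have hQG : Qᴴ * G = S := by
    rw [hS]
    show (Matrix.fromRows (Q₁ * E₁) (Q₂ * E₂))ᴴ * Matrix.fromRows G₁ G₂ = _
    rw [Matrix.conjTranspose_fromRows_eq_fromCols_conjTranspose,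
      Matrix.fromCols_mul_fromRows, Matrix.conjTranspose_mul,
      Matrix.conjTranspose_mul, Matrix.mul_assoc, Matrix.mul_assoc]
  have hQhG : Qhatᴴ * Ghat = S := by
    rw [hS]
    show (Matrix.fromRows E₁ E₂)ᴴ * Matrix.fromRows (Q₁ᴴ * G₁) (Q₂ᴴ * G₂) = _
    rw [Matrix.conjTranspose_fromRows_eq_fromCols_conjTranspose,
      Matrix.fromCols_mul_fromRows]
  have hRid : Ghat - Qhat * Qhatᴴ * Ghat = Matrix.fromRows R₁ R₂ := by
    rw [Matrix.mul_assoc, hQhG]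
    show Matrix.fromRows (Q₁ᴴ * G₁) (Q₂ᴴ * G₂) - Matrix.fromRows E₁ E₂ * S = _
    rw [Matrix.fromRows_mul, fromRows_sub]
  have hb₁ : X₁ + Q₁ * R₁ = G₁ - Q₁ * E₁ * S := by
    rw [hX₁, hR₁, Matrix.mul_sub, ← Matrix.mul_assoc Q₁ Q₁ᴴ G₁, ← Matrix.mul_assoc Q₁ E₁ S]
    abel
  have hb₂ : X₂ + Q₂ * R₂ = G₂ - Q₂ * E₂ * S := by
    rw [hX₂, hR₂, Matrix.mul_sub, ← Matrix.mul_assoc Q₂ Q₂ᴴ G₂, ← Matrix.mul_assoc Q₂ E₂ S]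
    abel
  have hGid : G - Q * Qᴴ * G = Matrix.fromRows (X₁ + Q₁ * R₁) (X₂ + Q₂ * R₂) := by
    rw [Matrix.mul_assoc, hQG, hb₁, hb₂]
    show Matrix.fromRows G₁ G₂ - Matrix.fromRows (Q₁ * E₁) (Q₂ * E₂) * S = _
    rw [Matrix.fromRows_mul, fromRows_sub]
  have horth₁ : X₁ᴴ * (Q₁ * R₁) = 0 := by
    have hXQ : X₁ᴴ * Q₁ = 0 := by
      rw [hX₁, Matrix.conjTranspose_sub, Matrix.sub_mul, Matrix.conjTranspose_mul,
        Matrix.conjTranspose_mul, Matrix.conjTranspose_conjTranspose,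
        Matrix.mul_assoc, Matrix.mul_assoc, hQ₁, Matrix.mul_one, sub_self]
    rw [← Matrix.mul_assoc, hXQ, Matrix.zero_mul]
  have horth₂ : X₂ᴴ * (Q₂ * R₂) = 0 := by
    have hXQ : X₂ᴴ * Q₂ = 0 := by
      rw [hX₂, Matrix.conjTranspose_sub, Matrix.sub_mul, Matrix.conjTranspose_mul,
        Matrix.conjTranspose_mul, Matrix.conjTranspose_conjTranspose,
        Matrix.mul_assoc, Matrix.mul_assoc, hQ₂, Matrix.mul_one, sub_self]
    rw [← Matrix.mul_assoc, hXQ, Matrix.zero_mul]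
  have key : frobNorm (G - Q * Qᴴ * G) ^ 2
      = frobSq X₁ + frobSq X₂ + (frobSq R₁ + frobSq R₂) := by
    rw [frobNorm_sq, hGid, frobSq_fromRows, frobSq_add_orth _ _ horth₁,
      frobSq_add_orth _ _ horth₂, frobSq_isometry _ _ hQ₁, frobSq_isometry _ _ hQ₂]
    ring
  have e1 : frobSq X₁ ≤ ε₁ ^ 2 := frobSq_le _ hε₁ (by rw [← frobNorm_eq]; exact h1)
  have e2 : frobSq X₂ ≤ ε₂ ^ 2 := frobSq_le _ hε₂ (by rw [← frobNorm_eq]; exact h2)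
  have e3 : frobSq R₁ + frobSq R₂ ≤ ε ^ 2 := by
    have := frobSq_le (Ghat - Qhat * Qhatᴴ * Ghat) hε (by rw [← frobNorm_eq]; exact h3)
    rwa [hRid, frobSq_fromRows] at this
  rw [key]; linarith
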